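/- In a Z_2-graded associative algebra A over a commutative ring K with deformed bracket [a,b]_u = ab - (-1)^{|a||b|} u·ba, for all homogeneous a,b,c and invertible scalars u,v,x one has [[a,b]_u, c]_v = [a, [b,c]_x]_{uv/x} + (-1)^{|b||c|} x·[[a,c]_{v/x}, b]_{u/x}. -/

import Mathlib

/-- The deformed super-bracket `[a,b]_u = ab - (-1)^{|a||b|} u · ba`, where the
parities `p`, `q` of the homogeneous elements `a`, `b` are supplied explicitly. -/
def superBracket {K A : Type*} [CommRing K] [Ring A] [Algebra K A]
    (u : K) (p q : ZMod 2) (a b : A) : A :=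
  a * b - ((-1 : K) ^ (p.val * q.val) * u) • (b * a)

theorem stmt_3 (K A : Type*) [CommRing K] [Ring A] [Algebra K A]
    (𝒜 : ZMod 2 → Submodule K A) [GradedAlgebra 𝒜]
    (pa pb pc : ZMod 2) (a b c : A)
    (ha : a ∈ 𝒜 pa) (hb : b ∈ 𝒜 pb) (hc : c ∈ 𝒜 pc)
    (u v x : Kˣ) :
    superBracket (v : K) (pa + pb) pc (superBracket (u : K) pa pb a b) c
      = superBracket ((u : K) * (v : K) * ((x⁻¹ : Kˣ) : K)) pa (pb + pc) a
          (superBracket (x : K) pb pc b c)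
        + ((-1 : K) ^ (pb.val * pc.val) * (x : K)) •
            superBracket ((u : K) * ((x⁻¹ : Kˣ) : K)) (pa + pc) pb
              (superBracket ((v : K) * ((x⁻¹ : Kˣ) : K)) pa pc a c) b := by
  have hx : (x : K) * ((x⁻¹ : Kˣ) : K) = 1 := Units.mul_inv x
  have h2 : ∀ p : ZMod 2, p = 0 ∨ p = 1 := by decide
  rcases h2 pa with rfl | rfl <;> rcases h2 pb with rfl | rfl <;> rcases h2 pc with rfl | rfl <;>
    simp only [Fin.mk_zero, Fin.mk_one, superBracket] <;>
    norm_num [superBracket, show ((1:ZMod 2)+1) = 0 from rfl,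
      show ZMod.val (2 : ZMod 2) = 0 from rfl,
      ZMod.val_zero, ZMod.val_one, mul_sub, sub_mul, mul_add, add_mul,
      smul_sub, sub_smul, smul_add, add_smul, neg_mul, mul_neg, smul_neg, neg_smul,
      smul_smul, mul_smul_comm, smul_mul_assoc, mul_assoc] <;>
    match_scalars <;>
    first
      | ring1
      | linear_combination (v : K) * hx
      | linear_combination (u : K) * hx
      | linear_combination (-(v : K)) * hx
      | linear_combination (-(u : K)) * hx
      | linear_combination ((u : K) * (v : K) * ((x⁻¹ : Kˣ) : K)) * hx
      | linear_combination (-((u : K) * (v : K) * ((x⁻¹ : Kˣ) : K))) * hx
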